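/- Let (W,S) be a Coxeter system with length function ℓ, and for u, v ∈ W say that w ∈ W lies in the convex closure of u and v if ℓ(u⁻¹w) + ℓ(w⁻¹v) = ℓ(u⁻¹v). Suppose that for every three elements x, y, z ∈ W there exist u, v ∈ W such that x, y and z all lie in the convex closure of u and v. Then for every finite subset F ⊆ W there exist u, v ∈ W such that every element of F lies in the convex closure of u and v. -/

import Mathlib

/-!
**STATEMENT 19.** Let `(W,S)` be a Coxeter system with length function `ℓ`.
Identifying the elements of `W` with the chambers of the Coxeter complex
`Σ(W,S)`, an element `w` lies in the convex closure of `u` and `v` exactly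
when `ℓ(u⁻¹w) + ℓ(w⁻¹v) = ℓ(u⁻¹v)`. If every three elements of `W` lie in the
convex closure of two elements, then every finite subset of `W` lies in the
convex closure of two elements.
-/

namespace IntersectionsOfApartments

open List CoxeterSystem

section Machinery

variable {B W : Type*} [Group W] {M : CoxeterMatrix B} (cs : CoxeterSystem M W)
variable [DecidableEq W]

local prefix:100 "s" => cs.simple
local prefix:100 "π" => cs.wordProd
local prefix:100 "ℓ" => cs.length
local prefix:100 "ris" => cs.rightInvSeq
local prefix:100 "lis" => cs.leftInvSeq

private lemma conj_inj (a b : W) : Function.Injective (fun x : W => a * x * b) := by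
  intro x y h
  simp only at h
  exact mul_left_cancel (mul_right_cancel h)

private lemma simple_conj_cancel (i : B) (t : W) : s i * (s i * t * s i) * s i = t := by
  calc s i * (s i * t * s i) * s i = (s i * s i) * t * (s i * s i) := by group
  _ = t := by rw [cs.simple_mul_simple_self]; group

private lemma simple_conj_eq_iff (i : B) (t : W) : (s i * t * s i = s i) ↔ (t = s i) := by
  constructor
  · intro h
    have h2 : s i * (s i * t * s i) * s i = s i * s i * s i := by rw [h]
    rw [simple_conj_cancel] at h2
    rw [h2, cs.simple_mul_simple_self, one_mul]
  · rintro rfl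
    rw [cs.simple_mul_simple_self, one_mul]

/-- The basic involution on `W × ℤˣ` associated to a simple reflection. -/
def sigma (i : B) : Equiv.Perm (W × ℤˣ) :=
  Function.Involutive.toPerm
    (fun p => (s i * p.1 * s i, if p.1 = s i then -p.2 else p.2))
    (by
      rintro ⟨t, ε⟩
      dsimp only
      rw [Prod.mk.injEq]
      refine ⟨simple_conj_cancel cs i t, ?_⟩
      by_cases ht : t = s i
      · rw [if_pos ((simple_conj_eq_iff cs i t).mpr ht), if_pos ht, neg_neg]
      · rw [if_neg (fun hc => ht ((simple_conj_eq_iff cs i t).mp hc)), if_neg ht])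

lemma sigma_apply (i : B) (t : W) (ε : ℤˣ) :
    sigma cs i (t, ε) = (s i * t * s i, if t = s i then -ε else ε) := rfl

lemma prod_map_sigma (ω : List B) (t : W) (ε : ℤˣ) :
    ((ω.map (sigma cs)).prod) (t, ε)
      = (π ω * t * (π ω)⁻¹, (-1 : ℤˣ) ^ ((ris ω).count t) * ε) := by
  induction ω generalizing t ε with
  | nil => simp
  | cons i ω ih =>
    rw [List.map_cons, List.prod_cons, Equiv.Perm.mul_apply, ih, sigma_apply]
    have hris : ris (i :: ω) = ((π ω)⁻¹ * s i * π ω) :: ris ω := rfl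
    have hcond : (π ω * t * (π ω)⁻¹ = s i) ↔ (t = (π ω)⁻¹ * s i * π ω) := by
      constructor
      · intro h; rw [← h]; group
      · intro h; rw [h]; group
    have hfirst : s i * (π ω * t * (π ω)⁻¹) * s i = π (i :: ω) * t * (π (i :: ω))⁻¹ := by
      rw [cs.wordProd_cons, mul_inv_rev, cs.inv_simple]; group
    rw [hris, List.count_cons]
    by_cases h : t = (π ω)⁻¹ * s i * π ω
    · rw [if_pos (hcond.mpr h), if_pos (beq_iff_eq.mpr h.symm), hfirst,
        pow_succ, mul_neg_one, neg_mul]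
    · rw [if_neg (fun hc => h (hcond.mp hc)),
        if_neg (fun hc => h (beq_iff_eq.mp hc).symm), hfirst, add_zero]

lemma drop_alternatingWord (i j : B) (n d : ℕ) :
    List.drop d (CoxeterSystem.alternatingWord i j n) = CoxeterSystem.alternatingWord i j (n - d) := by
  induction d generalizing n with
  | zero => simp
  | succ d ih =>
    cases n with
    | zero => simp [CoxeterSystem.alternatingWord]
    | succ n =>
      rw [CoxeterSystem.alternatingWord_succ', List.drop_succ_cons, ih]
      congr 1
      omega

private lemma hq_lemma (i j : B) (a : ℕ) :
    (s j * s i) ^ a * s j = s j * (s i * s j) ^ a := by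
  induction a with
  | zero => simp
  | succ a iha =>
    calc (s j * s i) ^ (a + 1) * s j
        = (s j * s i) * ((s j * s i) ^ a * s j) := by rw [pow_succ', mul_assoc]
    _ = (s j * s i) * (s j * (s i * s j) ^ a) := by rw [iha]
    _ = s j * (s i * s j) ^ (a + 1) := by rw [pow_succ']; simp only [mul_assoc]

lemma wordProd_alt_succ_conj (i j : B) (L : ℕ) :
    (π (CoxeterSystem.alternatingWord i j L))⁻¹ * π (CoxeterSystem.alternatingWord i j (L + 1))
      = (s j * s i) ^ L * s j := by
  rw [hq_lemma]
  have hinv : ∀ a : ℕ, ((s i * s j) ^ a)⁻¹ = (s j * s i) ^ a := by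
    intro a
    rw [← inv_pow, mul_inv_rev, cs.inv_simple, cs.inv_simple]
  rcases Nat.even_or_odd L with ⟨a, ha⟩ | ⟨a, ha⟩
  · have hL : L = 2 * a := by omega
    subst hL
    rw [cs.prod_alternatingWord_eq_mul_pow, cs.prod_alternatingWord_eq_mul_pow]
    rw [if_pos (by exact ⟨a, by ring⟩), if_neg (by simp [Nat.even_add_one, parity_simps])]
    have h1 : 2 * a / 2 = a := by omega
    have h2 : (2 * a + 1) / 2 = a := by omega
    rw [h1, h2, one_mul, hinv]
    calc (s j * s i) ^ a * (s j * (s i * s j) ^ a)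
        = ((s j * s i) ^ a * s j) * (s i * s j) ^ a := by rw [← mul_assoc]
    _ = s j * ((s i * s j) ^ a * (s i * s j) ^ a) := by rw [hq_lemma, mul_assoc]
    _ = s j * (s i * s j) ^ (2 * a) := by rw [← pow_add, two_mul]
  · have hL : L = 2 * a + 1 := by omega
    subst hL
    rw [cs.prod_alternatingWord_eq_mul_pow, cs.prod_alternatingWord_eq_mul_pow]
    rw [if_neg (by simp [parity_simps]), if_pos (by exact ⟨a + 1, by ring⟩)]
    have h1 : (2 * a + 1) / 2 = a := by omega
    have h2 : (2 * a + 1 + 1) / 2 = a + 1 := by omega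
    rw [h1, h2, one_mul, mul_inv_rev, hinv, cs.inv_simple]
    calc (s j * s i) ^ a * s j * (s i * s j) ^ (a + 1)
        = s j * ((s i * s j) ^ a * (s i * s j) ^ (a + 1)) := by rw [hq_lemma, mul_assoc]
    _ = s j * (s i * s j) ^ (2 * a + 1) := by
        rw [← pow_add, show a + (a + 1) = 2 * a + 1 from by omega]

lemma ris_alt_entry (i j : B) (m k : ℕ) (hk : k < 2 * m) :
    (ris (CoxeterSystem.alternatingWord i j (2 * m))).getD k 1
      = (s j * s i) ^ (2 * m - k - 1) * s j := by
  have hlen : (CoxeterSystem.alternatingWord i j (2 * m)).length = 2 * m :=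
    CoxeterSystem.length_alternatingWord i j (2 * m)
  rw [cs.getD_rightInvSeq]
  have hget : (CoxeterSystem.alternatingWord i j (2 * m))[k]?
      = some ((CoxeterSystem.alternatingWord i j (2 * m)).get ⟨k, by omega⟩) :=
    List.getElem?_eq_getElem (by omega)
  rw [hget]
  have hdropcons : (CoxeterSystem.alternatingWord i j (2 * m)).drop k
      = (CoxeterSystem.alternatingWord i j (2 * m)).get ⟨k, by omega⟩
        :: (CoxeterSystem.alternatingWord i j (2 * m)).drop (k + 1) := by
    exact List.drop_eq_getElem_cons (by omega)
  have hmul : (Option.map cs.simple (some ((CoxeterSystem.alternatingWord i j (2 * m)).get ⟨k, by omega⟩))).getD 1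
        * π ((CoxeterSystem.alternatingWord i j (2 * m)).drop (k + 1))
      = π ((CoxeterSystem.alternatingWord i j (2 * m)).drop k) := by
    rw [hdropcons, cs.wordProd_cons]
    rfl
  rw [mul_assoc, hmul, drop_alternatingWord, drop_alternatingWord]
  have h2 := wordProd_alt_succ_conj cs i j (2 * m - (k + 1))
  rw [show 2 * m - (k + 1) + 1 = 2 * m - k from by omega] at h2
  rw [h2, show 2 * m - (k + 1) = 2 * m - k - 1 from by omega]

lemma count_ris_alt_even (i j : B) (t : W) :
    Even ((ris (CoxeterSystem.alternatingWord i j (2 * M i j))).count t) := by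
  set m := M i j with hm
  set R := ris (CoxeterSystem.alternatingWord i j (2 * m)) with hR
  have hlen : R.length = 2 * m := by
    rw [hR, cs.length_rightInvSeq, CoxeterSystem.length_alternatingWord]
  have htd : R.take m = R.drop m := by
    apply List.ext_getElem
    · rw [List.length_take, List.length_drop, hlen]; omega
    · intro k h1 h2
      have hk : k < m := by rw [List.length_take, hlen] at h1; omega
      rw [List.getElem_take, List.getElem_drop]
      rw [← List.getD_eq_getElem R 1 (by omega), ← List.getD_eq_getElem R 1 (by omega)]
      rw [hR, ris_alt_entry cs i j m k (by omega), ris_alt_entry cs i j m (m + k) (by omega)]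
      have harith : 2 * m - k - 1 = (2 * m - (m + k) - 1) + m := by omega
      rw [harith, pow_add, hm, cs.simple_mul_simple_pow', mul_one]
  have hcc : R.count t = (R.drop m).count t + (R.drop m).count t := by
    nth_rewrite 1 [← List.take_append_drop m R]
    rw [List.count_append, htd]
  exact ⟨(R.drop m).count t, hcc⟩

lemma prod_map_sigma_alt (i j : B) (m : ℕ) :
    ((CoxeterSystem.alternatingWord i j (2 * m)).map (sigma cs)).prod
      = (sigma cs i * sigma cs j) ^ m := by
  induction m with
  | zero => simp [CoxeterSystem.alternatingWord]
  | succ m ih =>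
    have h : CoxeterSystem.alternatingWord i j (2 * (m + 1))
        = i :: j :: CoxeterSystem.alternatingWord i j (2 * m) := by
      have h1 : 2 * (m + 1) = (2 * m + 1) + 1 := by ring
      rw [h1, CoxeterSystem.alternatingWord_succ', CoxeterSystem.alternatingWord_succ']
      rw [if_neg (by simp [parity_simps]), if_pos ⟨m, by ring⟩]
    rw [h, List.map_cons, List.map_cons, List.prod_cons, List.prod_cons, ih, pow_succ']
    rw [← mul_assoc]

lemma sigma_liftable : M.IsLiftable (sigma cs) := by
  intro i j
  rw [← prod_map_sigma_alt]
  apply Equiv.ext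
  rintro ⟨t, ε⟩
  rw [prod_map_sigma]
  have hπ : π (CoxeterSystem.alternatingWord i j (2 * M i j)) = 1 := by
    rw [cs.prod_alternatingWord_eq_mul_pow]
    rw [if_pos ⟨M i j, by ring⟩, one_mul]
    have : 2 * M i j / 2 = M i j := by omega
    rw [this, cs.simple_mul_simple_pow]
  rw [hπ, Even.neg_one_pow (count_ris_alt_even cs i j t)]
  simp

/-- The permutation representation of `W` on `W × ℤˣ`. -/
def rho : W →* Equiv.Perm (W × ℤˣ) := cs.lift ⟨sigma cs, sigma_liftable cs⟩

/-- The sign of `t` relative to `w`. -/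
def eta (w t : W) : ℤˣ := ((rho cs w) (t, 1)).2

lemma rho_simple (i : B) : rho cs (s i) = sigma cs i :=
  cs.lift_apply_simple (sigma_liftable cs) i

lemma rho_wordProd (ω : List B) (t : W) (ε : ℤˣ) :
    rho cs (π ω) (t, ε) = (π ω * t * (π ω)⁻¹, (-1 : ℤˣ) ^ ((ris ω).count t) * ε) := by
  have h : rho cs (π ω) = ((ω.map (sigma cs)).prod) := by
    rw [show π ω = (List.map cs.simple ω).prod from rfl]
    rw [map_list_prod (rho cs), List.map_map]
    congr 1
    apply List.map_congr_left
    intro a _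
    exact rho_simple cs a
  rw [h, prod_map_sigma]

lemma eta_wordProd (ω : List B) (t : W) :
    eta cs (π ω) t = (-1 : ℤˣ) ^ ((ris ω).count t) := by
  unfold eta
  rw [rho_wordProd, mul_one]

lemma rho_apply (w t : W) (ε : ℤˣ) :
    rho cs w (t, ε) = (w * t * w⁻¹, eta cs w t * ε) := by
  obtain ⟨ω, rfl⟩ := cs.wordProd_surjective w
  rw [rho_wordProd, eta_wordProd]

lemma eta_mul (u v t : W) :
    eta cs (u * v) t = eta cs v t * eta cs u (v * t * v⁻¹) := by
  show ((rho cs (u * v)) (t, 1)).2 = _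
  rw [map_mul, Equiv.Perm.mul_apply, rho_apply cs v t 1, rho_apply cs u]
  dsimp only
  rw [mul_one, mul_comm]

lemma eta_simple (i : B) (t : W) :
    eta cs (s i) t = if t = s i then -1 else 1 := by
  unfold eta
  rw [rho_simple, sigma_apply]

lemma eta_neg_iff_mem {ω : List B} (hω : cs.IsReduced ω) (t : W) :
    eta cs (π ω) t = -1 ↔ t ∈ ris ω := by
  rw [eta_wordProd]
  have hnd := hω.nodup_rightInvSeq
  by_cases h : t ∈ ris ω
  · have h1 : (ris ω).count t = 1 :=
      le_antisymm (List.nodup_iff_count_le_one.mp hnd t) (List.count_pos_iff.mpr h)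
    simp [h1, h]
  · have h1 : (ris ω).count t = 0 := List.count_eq_zero.mpr h
    simp only [h1, pow_zero]
    constructor
    · intro hc; exact absurd hc (by decide)
    · intro hc; exact absurd hc h

lemma rightInvSeq_append (l₁ l₂ : List B) :
    ris (l₁ ++ l₂)
      = (ris l₁).map (fun x => (π l₂)⁻¹ * x * π l₂) ++ ris l₂ := by
  induction l₁ with
  | nil => simp
  | cons i l₁ ih =>
    have h1 : ris ((i :: l₁) ++ l₂)
        = ((π (l₁ ++ l₂))⁻¹ * s i * π (l₁ ++ l₂)) :: ris (l₁ ++ l₂) := rfl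
    have h2 : ris (i :: l₁) = ((π l₁)⁻¹ * s i * π l₁) :: ris l₁ := rfl
    rw [h1, h2, ih, List.map_cons]
    rw [cs.wordProd_append]
    congr 1
    rw [mul_inv_rev]
    group

lemma leftInvSeq_eq_map_conj (ω : List B) :
    lis ω = (ris ω).map (fun x => π ω * x * (π ω)⁻¹) := by
  induction ω with
  | nil => simp
  | cons i ω ih =>
    have h1 : lis (i :: ω) = s i :: List.map (⇑(MulAut.conj (s i))) (lis ω) := rfl
    have h2 : ris (i :: ω) = ((π ω)⁻¹ * s i * π ω) :: ris ω := rfl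
    rw [h1, h2, ih, List.map_cons, List.map_map]
    congr 1
    · rw [cs.wordProd_cons, mul_inv_rev, cs.inv_simple]
      symm
      calc s i * π ω * ((π ω)⁻¹ * s i * π ω) * ((π ω)⁻¹ * s i)
          = s i * (π ω * (π ω)⁻¹) * s i * (π ω * (π ω)⁻¹) * s i := by group
      _ = s i * 1 * s i * 1 * s i := by rw [mul_inv_cancel]
      _ = s i := by rw [mul_one, mul_one, cs.simple_mul_simple_self, one_mul]
    · apply List.map_congr_left
      intro x _
      simp only [Function.comp_apply, MulAut.conj_apply, cs.wordProd_cons, mul_inv_rev,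
        cs.inv_simple]
      group

lemma eta_refl_self {t : W} (ht : cs.IsReflection t) : eta cs t t = -1 := by
  obtain ⟨w, i, rfl⟩ := ht
  obtain ⟨χ, rfl⟩ := cs.wordProd_surjective w
  have hπ : π (χ ++ i :: χ.reverse) = π χ * s i * (π χ)⁻¹ := by
    rw [cs.wordProd_append, cs.wordProd_cons, cs.wordProd_reverse, mul_assoc]
  nth_rewrite 1 [← hπ]
  rw [eta_wordProd]
  set t := π χ * s i * (π χ)⁻¹ with htdef
  have hsplit := rightInvSeq_append cs χ (i :: χ.reverse)
  have hπ2 : π (i :: χ.reverse) = s i * (π χ)⁻¹ := by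
    rw [cs.wordProd_cons, cs.wordProd_reverse]
  have hcons : ris (i :: χ.reverse)
      = ((π χ.reverse)⁻¹ * s i * π χ.reverse) :: ris χ.reverse := rfl
  have hhead : (π χ.reverse)⁻¹ * s i * π χ.reverse = t := by
    rw [cs.wordProd_reverse, inv_inv, htdef]
  have hc1 : ((ris χ).map (fun x => (π (i :: χ.reverse))⁻¹ * x * π (i :: χ.reverse))).count t
      = (ris χ).count (s i) := by
    have ht' : t = (π (i :: χ.reverse))⁻¹ * s i * π (i :: χ.reverse) := by
      rw [hπ2, mul_inv_rev, cs.inv_simple, inv_inv, htdef]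
      calc π χ * s i * (π χ)⁻¹
          = π χ * s i * (s i * s i) * (π χ)⁻¹ := by
            rw [cs.simple_mul_simple_self, mul_one]
      _ = π χ * s i * s i * (s i * (π χ)⁻¹) := by
            simp only [mul_assoc]
    rw [ht']
    exact List.count_map_of_injective _ _ (conj_inj _ _) _
  have hc2 : (ris χ.reverse).count t = (ris χ).count (s i) := by
    rw [cs.rightInvSeq_reverse, List.count_reverse, leftInvSeq_eq_map_conj]
    have ht' : t = π χ * s i * (π χ)⁻¹ := htdef
    rw [ht']
    exact List.count_map_of_injective _ _ (conj_inj _ _) _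
  rw [hsplit, List.count_append]
  rw [hc1]
  rw [hcons, List.count_cons, hhead, if_pos (beq_self_eq_true t), hc2]
  have hodd : Odd ((ris χ).count (s i) + ((ris χ).count (s i) + 1)) :=
    ⟨(ris χ).count (s i), by omega⟩
  exact Odd.neg_one_pow hodd

lemma eta_neg_iff {t : W} (ht : cs.IsReflection t) (w : W) :
    eta cs w t = -1 ↔ ℓ (w * t) < ℓ w := by
  have aux : ∀ v : W, eta cs v t = -1 → ℓ (v * t) < ℓ v := by
    intro v hv
    obtain ⟨ω, hω, rfl⟩ := cs.exists_reduced_word' v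
    rw [eta_neg_iff_mem cs hω] at hv
    exact (cs.isRightInversion_of_mem_rightInvSeq hω hv).2
  constructor
  · exact aux w
  · intro hlt
    rcases Int.units_eq_one_or (eta cs w t) with h1 | h1
    · exfalso
      have h2 : eta cs (w * t) t = -1 := by
        rw [eta_mul]
        have h3 : t * t * t⁻¹ = t := by rw [ht.mul_self, one_mul, ht.inv]
        rw [h3, eta_refl_self cs ht, h1, mul_one]
      have h4 := aux (w * t) h2
      rw [mul_assoc, ht.mul_self, mul_one] at h4
      omega
    · exact h1

lemma eta_inv_neg_iff {t : W} (ht : cs.IsReflection t) (w : W) :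
    eta cs w⁻¹ t = -1 ↔ ℓ (t * w) < ℓ w := by
  rw [eta_neg_iff cs ht w⁻¹]
  have h1 : ℓ (w⁻¹ * t) = ℓ (t * w) := by
    calc ℓ (w⁻¹ * t) = ℓ ((w⁻¹ * t)⁻¹) := (cs.length_inv _).symm
    _ = ℓ (t * w) := by rw [mul_inv_rev, inv_inv, ht.inv]
  rw [h1, cs.length_inv]

lemma mem_leftInvSeq_iff {ω : List B} (hω : cs.IsReduced ω) (t : W) :
    t ∈ lis ω ↔ eta cs (π ω)⁻¹ t = -1 := by
  have hrev : cs.IsReduced ω.reverse := (cs.isReduced_reverse_iff ω).mpr hω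
  rw [show (π ω)⁻¹ = π ω.reverse from (cs.wordProd_reverse ω).symm]
  rw [eta_neg_iff_mem cs hrev, cs.rightInvSeq_reverse, List.mem_reverse]

lemma between_of_inversions (n : ℕ) : ∀ w e : W, ℓ w ≤ n →
    (∀ t, cs.IsReflection t → ℓ (t * w) < ℓ w → ℓ (t * e) < ℓ e) →
    ℓ w + ℓ (w⁻¹ * e) = ℓ e := by
  induction n with
  | zero =>
    intro w e hle _
    have hw : w = 1 := cs.length_eq_zero_iff.mp (Nat.le_zero.mp hle)
    subst hw
    simp
  | succ n ih =>
    intro w e hle h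
    by_cases hw1 : w = 1
    · subst hw1; simp
    obtain ⟨i, hi⟩ := cs.exists_leftDescent_of_ne_one hw1
    have hi : ℓ (s i * w) < ℓ w := hi
    have hie : ℓ (s i * e) < ℓ e := h (s i) (cs.isReflection_simple i) hi
    have h' : ∀ t, cs.IsReflection t → ℓ (t * (s i * w)) < ℓ (s i * w) →
        ℓ (t * (s i * e)) < ℓ (s i * e) := by
      intro t ht hlt
      by_cases hts : t = s i
      · exfalso
        subst hts
        rw [cs.simple_mul_simple_cancel_left] at hlt
        omega
      · have ht' : cs.IsReflection (s i * t * s i) := by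
          have := ht.conj (s i)
          rwa [cs.inv_simple] at this
        have hne' : s i * t * s i ≠ s i := fun hc => hts ((simple_conj_eq_iff cs i t).mp hc)
        have hinv1 : eta cs (s i * w)⁻¹ t = -1 := (eta_inv_neg_iff cs ht (s i * w)).mpr hlt
        have hdec : (s i * w)⁻¹ * s i = w⁻¹ := by
          rw [mul_inv_rev, cs.inv_simple, mul_assoc, cs.simple_mul_simple_self, mul_one]
        have hw2 : eta cs w⁻¹ (s i * t * s i) = -1 := by
          rw [← hdec, eta_mul]
          have e2 : s i * (s i * t * s i) * (s i)⁻¹ = t := by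
            rw [cs.inv_simple]
            exact simple_conj_cancel cs i t
          rw [e2, hinv1, eta_simple, if_neg hne', one_mul]
        have hw3 : ℓ ((s i * t * s i) * w) < ℓ w := (eta_inv_neg_iff cs ht' w).mp hw2
        have he3 : ℓ ((s i * t * s i) * e) < ℓ e := h _ ht' hw3
        have he4 : eta cs e⁻¹ (s i * t * s i) = -1 := (eta_inv_neg_iff cs ht' e).mpr he3
        have he5 : eta cs (s i * e)⁻¹ t = -1 := by
          have hdec2 : (s i * e)⁻¹ = e⁻¹ * s i := by rw [mul_inv_rev, cs.inv_simple]
          rw [hdec2, eta_mul, cs.inv_simple, he4, eta_simple, if_neg hts, one_mul]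
        exact (eta_inv_neg_iff cs ht (s i * e)).mp he5
    have hlen : ℓ (s i * w) ≤ n := by omega
    have hrec := ih (s i * w) (s i * e) hlen h'
    have hprod : (s i * w)⁻¹ * (s i * e) = w⁻¹ * e := by
      rw [mul_inv_rev, cs.inv_simple, mul_assoc, ← mul_assoc (s i), cs.simple_mul_simple_self,
        one_mul]
    rw [hprod] at hrec
    rcases cs.length_simple_mul w i with hw4 | hw4 <;>
      rcases cs.length_simple_mul e i with he4 | he4 <;> omega

/-- The two-sided criterion: `w` lies between `1` and `e` iff every left
inversion of `w` is a left inversion of `e`. -/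
theorem between_iff (w e : W) :
    ℓ w + ℓ (w⁻¹ * e) = ℓ e ↔
      ∀ t, cs.IsReflection t → ℓ (t * w) < ℓ w → ℓ (t * e) < ℓ e := by
  constructor
  · intro h t ht hlt
    obtain ⟨ω, hω, hw'⟩ := cs.exists_reduced_word' w
    obtain ⟨ω', hω', he'⟩ := cs.exists_reduced_word' (w⁻¹ * e)
    have hprod : π (ω ++ ω') = e := by
      rw [cs.wordProd_append, ← hw', ← he']
      group
    have hred : cs.IsReduced (ω ++ ω') := by
      unfold CoxeterSystem.IsReduced
      rw [hprod, List.length_append]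
      have h1 : ℓ w = ω.length := by rw [hw']; exact hω
      have h2 : ℓ (w⁻¹ * e) = ω'.length := by rw [he']; exact hω'
      omega
    have hmem : t ∈ lis ω := by
      rw [mem_leftInvSeq_iff cs hω, ← hw']
      exact (eta_inv_neg_iff cs ht w).mpr hlt
    have hmem2 : t ∈ lis (ω ++ ω') := by
      have htake := cs.leftInvSeq_take (ω ++ ω') ω.length
      rw [List.take_left] at htake
      rw [htake] at hmem
      exact List.mem_of_mem_take hmem
    have hfin := (cs.isLeftInversion_of_mem_leftInvSeq hred hmem2).2
    rwa [hprod] at hfin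
  · intro h
    exact between_of_inversions cs (ℓ w) w e le_rfl h

/-- The sign of the wall `r` between the chambers `a` and `b`. -/
def eps (r a b : W) : ℤˣ := eta cs (b⁻¹ * a) (a⁻¹ * r * a)

lemma eps_neg_iff {r : W} (hr : cs.IsReflection r) (a b : W) :
    eps cs r a b = -1 ↔ ℓ ((a⁻¹ * r * a) * (a⁻¹ * b)) < ℓ (a⁻¹ * b) := by
  have ht : cs.IsReflection (a⁻¹ * r * a) := by
    have := hr.conj a⁻¹
    rwa [inv_inv] at this
  have h := eta_inv_neg_iff cs ht (a⁻¹ * b)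
  rw [mul_inv_rev, inv_inv] at h
  exact h

lemma eps_mul (r a b c : W) :
    eps cs r a c = eps cs r a b * eps cs r b c := by
  unfold eps
  have hdec : c⁻¹ * a = (c⁻¹ * b) * (b⁻¹ * a) := by group
  rw [hdec, eta_mul]
  have hconj : (b⁻¹ * a) * (a⁻¹ * r * a) * (b⁻¹ * a)⁻¹ = b⁻¹ * r * b := by group
  rw [hconj]

theorem between_iff' (a w b : W) :
    ℓ (a⁻¹ * w) + ℓ (w⁻¹ * b) = ℓ (a⁻¹ * b) ↔
      ∀ r, cs.IsReflection r → eps cs r a w = -1 → eps cs r a b = -1 := by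
  have hx : (a⁻¹ * w)⁻¹ * (a⁻¹ * b) = w⁻¹ * b := by group
  rw [← hx, between_iff]
  constructor
  · intro h r hr hrw
    have ht : cs.IsReflection (a⁻¹ * r * a) := by
      have := hr.conj a⁻¹
      rwa [inv_inv] at this
    rw [eps_neg_iff cs hr] at hrw ⊢
    exact h _ ht hrw
  · intro h t ht hlt
    have hr : cs.IsReflection (a * t * a⁻¹) := ht.conj a
    have hconv : a⁻¹ * (a * t * a⁻¹) * a = t := by group
    have h1 : eps cs (a * t * a⁻¹) a w = -1 := by
      rw [eps_neg_iff cs hr, hconv]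
      exact hlt
    have h2 := h _ hr h1
    rw [eps_neg_iff cs hr, hconv] at h2
    exact h2

theorem convex {u' u v' v w : W}
    (hu : ℓ (u'⁻¹ * u) + ℓ (u⁻¹ * v') = ℓ (u'⁻¹ * v'))
    (hv : ℓ (u'⁻¹ * v) + ℓ (v⁻¹ * v') = ℓ (u'⁻¹ * v'))
    (hw : ℓ (u⁻¹ * w) + ℓ (w⁻¹ * v) = ℓ (u⁻¹ * v)) :
    ℓ (u'⁻¹ * w) + ℓ (w⁻¹ * v') = ℓ (u'⁻¹ * v') := by
  rw [between_iff'] at hu hv hw ⊢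
  intro r hr hrw
  have e1 := eps_mul cs r u' u w
  rcases Int.units_eq_one_or (eps cs r u' u) with h1 | h1
  · have h2 : eps cs r u w = -1 := by
      rw [e1, h1, one_mul] at hrw
      exact hrw
    have h3 := hw r hr h2
    have h4 : eps cs r u' v = -1 := by
      rw [eps_mul cs r u' u v, h1, one_mul]
      exact h3
    exact hv r hr h4
  · exact hu r hr h1

end Machinery

theorem statement_19 {B W : Type*} [Group W] {M : CoxeterMatrix B}
    (cs : CoxeterSystem M W)
    (h3 : ∀ x y z : W, ∃ u v : W,
      (cs.length (u⁻¹ * x) + cs.length (x⁻¹ * v) = cs.length (u⁻¹ * v)) ∧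
      (cs.length (u⁻¹ * y) + cs.length (y⁻¹ * v) = cs.length (u⁻¹ * v)) ∧
      (cs.length (u⁻¹ * z) + cs.length (z⁻¹ * v) = cs.length (u⁻¹ * v)))
    (F : Finset W) :
    ∃ u v : W, ∀ w ∈ F,
      cs.length (u⁻¹ * w) + cs.length (w⁻¹ * v) = cs.length (u⁻¹ * v) := by
  letI : DecidableEq W := Classical.decEq W
  induction F using Finset.induction_on with
  | empty => exact ⟨1, 1, fun w hw => absurd hw (Finset.notMem_empty w)⟩
  | @insert a F ha ih =>
    obtain ⟨u, v, hF⟩ := ih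
    obtain ⟨u', v', hu, hv, hA⟩ := h3 u v a
    refine ⟨u', v', fun w hw => ?_⟩
    rcases Finset.mem_insert.mp hw with rfl | hwF
    · exact hA
    · exact convex cs hu hv (hF w hwF)

end IntersectionsOfApartments
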